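/- Let x* ∈ X with A x* = f be a B-normal solution, i.e. ‖(A + B(α))^{-1} B(α) x*‖ → 0 as S ∋ α → 0. Suppose ‖(A + B(α))^{-1}‖ ≤ c(|α|) for all α ∈ S. For each δ in some interval (0, δ₀] let Ã_δ : X → Y be bounded with ‖Ã_δ − A‖ ≤ δ, let f̃_δ ∈ Y with ‖f̃_δ − f‖ ≤ δ, and let α(δ) ∈ S be chosen so that |α(δ)| → 0 as δ → 0⁺ and δ·c(|α(δ)|) ≤ q for a fixed q ∈ (0,1) with δ·c(|α(δ)|) → 0 as δ → 0⁺. Then for each such δ the equation (Ã_δ + B(α(δ))) x = f̃_δ has a unique solution x̃_δ, and ‖x̃_δ − x*‖ → 0 as δ → 0⁺. (Main Theorem, convergence part.) -/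

import Mathlib

open Set Filter Topology

/-- Main Theorem, convergence part: if `x*` is a `B`-normal solution of
`A x = f` and the regularization parameter `α(δ)` is coordinated with the
noise level `δ`, then for each `δ ∈ (0, δ₀]` the regularized equation
`(Ã_δ + B(α(δ))) x = f̃_δ` has a unique solution `x̃_δ`, and
`‖x̃_δ − x*‖ → 0` as `δ → 0⁺`. -/
theorem main_theorem_convergence
    {X Y : Type*} [NormedAddCommGroup X] [NormedSpace ℝ X] [CompleteSpace X]
    [NormedAddCommGroup Y] [NormedSpace ℝ Y] [CompleteSpace Y]
    {n : ℕ} (S : Set (EuclideanSpace ℝ (Fin n)))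
    (hS : (0 : EuclideanSpace ℝ (Fin n)) ∈ closure S)
    (A : X →L[ℝ] Y) (B : EuclideanSpace ℝ (Fin n) → X →L[ℝ] Y)
    (Rinv : EuclideanSpace ℝ (Fin n) → Y →L[ℝ] X)
    (hinv : ∀ α ∈ S, (∀ x : X, Rinv α ((A + B α) x) = x) ∧
      (∀ y : Y, (A + B α) (Rinv α y) = y))
    (c : ℝ → ℝ) (hc_cont : ContinuousOn c (Ioi 0)) (hc_pos : ∀ r > 0, 0 < c r)
    (hbound : ∀ α ∈ S, ‖Rinv α‖ ≤ c ‖α‖)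
    (f : Y) (xs : X) (hxs : A xs = f)
    (hBnormal : ∀ ε > 0, ∃ r > 0, ∀ α ∈ S, ‖α‖ < r → ‖Rinv α (B α xs)‖ < ε)
    (δ₀ : ℝ) (hδ₀ : 0 < δ₀)
    (Atil : ℝ → X →L[ℝ] Y) (ftil : ℝ → Y)
    (αsel : ℝ → EuclideanSpace ℝ (Fin n))
    (hAtil : ∀ δ ∈ Ioc (0 : ℝ) δ₀, ‖Atil δ - A‖ ≤ δ)
    (hftil : ∀ δ ∈ Ioc (0 : ℝ) δ₀, ‖ftil δ - f‖ ≤ δ)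
    (hαS : ∀ δ ∈ Ioc (0 : ℝ) δ₀, αsel δ ∈ S)
    (hα0 : Tendsto (fun δ => ‖αsel δ‖) (𝓝[>] (0 : ℝ)) (𝓝 0))
    (q : ℝ) (hq : q ∈ Ioo (0 : ℝ) 1)
    (hqc : ∀ δ ∈ Ioc (0 : ℝ) δ₀, δ * c ‖αsel δ‖ ≤ q)
    (hcoord : Tendsto (fun δ => δ * c ‖αsel δ‖) (𝓝[>] (0 : ℝ)) (𝓝 0)) :
    (∀ δ ∈ Ioc (0 : ℝ) δ₀, ∃! x : X, (Atil δ + B (αsel δ)) x = ftil δ) ∧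
    (∀ xt : ℝ → X,
      (∀ δ ∈ Ioc (0 : ℝ) δ₀, (Atil δ + B (αsel δ)) (xt δ) = ftil δ) →
      Tendsto (fun δ => ‖xt δ - xs‖) (𝓝[>] (0 : ℝ)) (𝓝 0)) := by
  obtain ⟨hq0, hq1⟩ := hq
  -- A unit of `X →L[ℝ] X` characterizing the solutions of the perturbed equation.
  have key : ∀ δ ∈ Ioc (0:ℝ) δ₀, ∃ u : (X →L[ℝ] X)ˣ,
      ∀ x : X, ((Atil δ + B (αsel δ)) x = ftil δ ↔
        (u : X →L[ℝ] X) x = Rinv (αsel δ) (ftil δ)) := by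
    intro δ hδ
    obtain ⟨hL, hR⟩ := hinv _ (hαS δ hδ)
    set R := Rinv (αsel δ) with hRdef
    set D := Atil δ - A with hDdef
    have hTnorm : ‖R.comp D‖ < 1 := by
      have h1 : ‖R.comp D‖ ≤ ‖R‖ * ‖D‖ := ContinuousLinearMap.opNorm_comp_le _ _
      have h2 : ‖R‖ ≤ c ‖αsel δ‖ := hbound _ (hαS δ hδ)
      have h3 : ‖D‖ ≤ δ := hAtil δ hδ
      have h4 : ‖R‖ * ‖D‖ ≤ c ‖αsel δ‖ * δ :=
        mul_le_mul h2 h3 (norm_nonneg _) ((norm_nonneg R).trans h2)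
      have h5 : c ‖αsel δ‖ * δ ≤ q := by rw [mul_comm]; exact hqc δ hδ
      linarith
    have hTnorm' : ‖-(R.comp D)‖ < 1 := by rwa [norm_neg]
    refine ⟨Units.oneSub _ hTnorm', fun x => ?_⟩
    have huval : ((Units.oneSub _ hTnorm' : (X →L[ℝ] X)ˣ) : X →L[ℝ] X)
        = 1 + R.comp D := by
      rw [Units.val_oneSub, sub_neg_eq_add]
    rw [huval]
    have hux : (1 + R.comp D) x = x + R (D x) := by
      simp [ContinuousLinearMap.add_apply]
    constructor
    · intro h
      have h' : (A + B (αsel δ)) x + D x = ftil δ := by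
        simp only [hDdef, ContinuousLinearMap.add_apply,
          ContinuousLinearMap.sub_apply] at h ⊢
        rw [← h]; abel
      calc (1 + R.comp D) x = x + R (D x) := hux
        _ = R ((A + B (αsel δ)) x) + R (D x) := by rw [hL]
        _ = R ((A + B (αsel δ)) x + D x) := by rw [map_add]
        _ = R (ftil δ) := by rw [h']
    · intro h
      rw [hux] at h
      have h2 := congrArg (A + B (αsel δ)) h
      rw [map_add, hR, hR] at h2
      -- h2 : (A + B α) x + D x = ftil δ
      simp only [hDdef, ContinuousLinearMap.add_apply,
        ContinuousLinearMap.sub_apply] at h2 ⊢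
      rw [← h2]; abel
  constructor
  · intro δ hδ
    obtain ⟨u, hu⟩ := key δ hδ
    refine ⟨(↑u⁻¹ : X →L[ℝ] X) (Rinv (αsel δ) (ftil δ)), ?_, ?_⟩
    · show (Atil δ + B (αsel δ)) ((↑u⁻¹ : X →L[ℝ] X) (Rinv (αsel δ) (ftil δ))) = ftil δ
      rw [hu]
      rw [← ContinuousLinearMap.mul_apply, u.mul_inv, ContinuousLinearMap.one_apply]
    · intro x hx
      have h1 := (hu x).mp hx
      have : (↑u⁻¹ : X →L[ℝ] X) ((↑u : X →L[ℝ] X) x)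
          = (↑u⁻¹ : X →L[ℝ] X) (Rinv (αsel δ) (ftil δ)) := by rw [h1]
      rwa [← ContinuousLinearMap.mul_apply, u.inv_mul,
        ContinuousLinearMap.one_apply] at this
  · intro xt hxt
    have hmem : Ioc (0:ℝ) δ₀ ∈ 𝓝[>] (0:ℝ) := by
      apply inter_mem_nhdsWithin
      exact Iic_mem_nhds hδ₀
    -- the second term tends to 0
    have T2 : Tendsto (fun δ => ‖Rinv (αsel δ) (B (αsel δ) xs)‖)
        (𝓝[>] (0:ℝ)) (𝓝 0) := by
      rw [Metric.tendsto_nhds]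
      intro ε hε
      obtain ⟨r, hr, hrε⟩ := hBnormal ε hε
      have h1 : ∀ᶠ δ in 𝓝[>] (0:ℝ), ‖αsel δ‖ < r := hα0.eventually (gt_mem_nhds hr)
      filter_upwards [h1, hmem] with δ hδ1 hδ2
      have := hrε _ (hαS δ hδ2) hδ1
      rw [Real.dist_eq, sub_zero, abs_of_nonneg (norm_nonneg _)]
      exact this
    have hg : Tendsto (fun δ => (δ * c ‖αsel δ‖ * (1 + ‖xs‖)
        + ‖Rinv (αsel δ) (B (αsel δ) xs)‖) / (1 - q)) (𝓝[>] (0:ℝ)) (𝓝 0) := by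
      have := ((hcoord.mul_const (1 + ‖xs‖)).add T2).div_const (1 - q)
      simpa using this
    apply squeeze_zero' (Eventually.of_forall fun δ => norm_nonneg _) _ hg
    filter_upwards [hmem] with δ hδ
    obtain ⟨hL, hR⟩ := hinv _ (hαS δ hδ)
    set R := Rinv (αsel δ) with hRdef
    have hxteq : Atil δ (xt δ) + B (αsel δ) (xt δ) = ftil δ := by
      simpa [ContinuousLinearMap.add_apply] using hxt δ hδ
    have h1 : (A + B (αsel δ)) (xt δ - xs)
        = (ftil δ - f) - (Atil δ - A) (xt δ) - B (αsel δ) xs := by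
      simp only [ContinuousLinearMap.add_apply, ContinuousLinearMap.sub_apply, map_sub]
      rw [← hxteq, ← hxs]; abel
    have h2 : xt δ - xs
        = R (ftil δ - f) - R ((Atil δ - A) (xt δ)) - R (B (αsel δ) xs) := by
      rw [← hL (xt δ - xs), h1, map_sub, map_sub]
    set E := ‖xt δ - xs‖ with hE
    set M := ‖R (B (αsel δ) xs)‖ with hM
    set K := c ‖αsel δ‖ with hK
    have hRn : ‖R‖ ≤ K := hbound _ (hαS δ hδ)
    have hK0 : (0:ℝ) ≤ K := (norm_nonneg R).trans hRn
    have hfn : ‖ftil δ - f‖ ≤ δ := hftil δ hδ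
    have hAn : ‖Atil δ - A‖ ≤ δ := hAtil δ hδ
    have hδpos : (0:ℝ) < δ := hδ.1
    have hKδq : δ * K ≤ q := hqc δ hδ
    have hxtn : ‖xt δ‖ ≤ E + ‖xs‖ := by
      calc ‖xt δ‖ = ‖(xt δ - xs) + xs‖ := congrArg norm (by abel)
        _ ≤ E + ‖xs‖ := norm_add_le _ _
    have hn : E ≤ ‖R‖ * ‖ftil δ - f‖ + ‖R‖ * ‖(Atil δ - A) (xt δ)‖ + M := by
      rw [hE, h2]
      calc ‖R (ftil δ - f) - R ((Atil δ - A) (xt δ)) - R (B (αsel δ) xs)‖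
          ≤ ‖R (ftil δ - f) - R ((Atil δ - A) (xt δ))‖ + ‖R (B (αsel δ) xs)‖ :=
            norm_sub_le _ _
        _ ≤ ‖R (ftil δ - f)‖ + ‖R ((Atil δ - A) (xt δ))‖ + M :=
            add_le_add (norm_sub_le _ _) le_rfl
        _ ≤ ‖R‖ * ‖ftil δ - f‖ + ‖R‖ * ‖(Atil δ - A) (xt δ)‖ + M := by
            gcongr <;> exact ContinuousLinearMap.le_opNorm _ _
    have h3 : ‖(Atil δ - A) (xt δ)‖ ≤ δ * (E + ‖xs‖) :=
      le_trans (ContinuousLinearMap.le_opNorm _ _)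
        (mul_le_mul hAn hxtn (norm_nonneg _) hδpos.le)
    have t1 : ‖R‖ * ‖ftil δ - f‖ ≤ K * δ :=
      mul_le_mul hRn hfn (norm_nonneg _) hK0
    have t3 : ‖R‖ * ‖(Atil δ - A) (xt δ)‖ ≤ K * (δ * (E + ‖xs‖)) :=
      mul_le_mul hRn h3 (norm_nonneg _) hK0
    have t4 : δ * K * E ≤ q * E :=
      mul_le_mul_of_nonneg_right hKδq (norm_nonneg _)
    rw [le_div_iff₀ (by linarith)]
    nlinarith [norm_nonneg (R (B (αsel δ) xs))]
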